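/- arXiv:1010.2900 — 4 statements merged into one kernel-verified Lean document; each statement's English description precedes it below -/
import Mathlib

section
/- Let A ∈ sp(2(n+1),ℝ) be nonzero with A² = k²·Id for some k > 0. Then A is diagonalizable over ℝ with eigenvalues ±k, the eigenspaces V⁺ and V⁻ are Lagrangian subspaces of (ℝ^{2(n+1)}, Ω), and in particular each has dimension n+1. -/
open Finset

/-- The standard symplectic form on `ℝⁿ × ℝⁿ` (pairing the two factors). -/
noncomputable def stdOmega (n : ℕ) :
    LinearMap.BilinForm ℝ ((Fin n → ℝ) × (Fin n → ℝ)) :=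
  LinearMap.mk₂ ℝ (fun x y => ∑ i, (x.1 i * y.2 i - x.2 i * y.1 i))
    (by
      intro x x' y
      simp only [Prod.fst_add, Prod.snd_add, Pi.add_apply]
      rw [← Finset.sum_add_distrib]
      exact Finset.sum_congr rfl fun i _ => by ring)
    (by
      intro c x y
      simp only [Prod.smul_fst, Prod.smul_snd, Pi.smul_apply, smul_eq_mul]
      rw [Finset.mul_sum]
      exact Finset.sum_congr rfl fun i _ => by ring)
    (by
      intro x y y'
      simp only [Prod.fst_add, Prod.snd_add, Pi.add_apply]
      rw [← Finset.sum_add_distrib]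
      exact Finset.sum_congr rfl fun i _ => by ring)
    (by
      intro c x y
      simp only [Prod.smul_fst, Prod.smul_snd, Pi.smul_apply, smul_eq_mul]
      rw [Finset.mul_sum]
      exact Finset.sum_congr rfl fun i _ => by ring)

set_option maxHeartbeats 1600000 in
/-- If `A ∈ sp(2(n+1),ℝ)` is nonzero with `A² = k²·Id`, `k > 0`, then `A` is
diagonalizable over `ℝ` with eigenvalues `±k`: the eigenspaces `V⁺`, `V⁻` are complementary, and
each is a Lagrangian subspace of the standard symplectic space (isotropic of dimension `n+1`). -/
theorem sp_square_positive_eigenspaces_lagrangian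
    (n : ℕ) (k : ℝ) (hk : 0 < k)
    (A : ((Fin (n + 1) → ℝ) × (Fin (n + 1) → ℝ)) →ₗ[ℝ]
         ((Fin (n + 1) → ℝ) × (Fin (n + 1) → ℝ)))
    (hA : A ≠ 0)
    (hsp : ∀ x y, stdOmega (n + 1) (A x) y + stdOmega (n + 1) x (A y) = 0)
    (hA2 : A ∘ₗ A = (k ^ 2) • LinearMap.id) :
    Module.End.HasEigenvalue A k ∧ Module.End.HasEigenvalue A (-k) ∧
    IsCompl (LinearMap.ker (A - k • LinearMap.id)) (LinearMap.ker (A + k • LinearMap.id)) ∧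
    (∀ x ∈ LinearMap.ker (A - k • LinearMap.id), ∀ y ∈ LinearMap.ker (A - k • LinearMap.id),
      stdOmega (n + 1) x y = 0) ∧
    (∀ x ∈ LinearMap.ker (A + k • LinearMap.id), ∀ y ∈ LinearMap.ker (A + k • LinearMap.id),
      stdOmega (n + 1) x y = 0) ∧
    Module.finrank ℝ (LinearMap.ker (A - k • LinearMap.id)) = n + 1 ∧
    Module.finrank ℝ (LinearMap.ker (A + k • LinearMap.id)) = n + 1 := by
  set V := (Fin (n + 1) → ℝ) × (Fin (n + 1) → ℝ) with hV
  set Ω := stdOmega (n + 1) with hΩ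
  set Kp := LinearMap.ker (A - k • LinearMap.id) with hKp
  set Km := LinearMap.ker (A + k • LinearMap.id) with hKm
  have hk0 : k ≠ 0 := ne_of_gt hk
  have homega : ∀ x y : V, Ω x y = ∑ i, (x.1 i * y.2 i - x.2 i * y.1 i) := fun x y => rfl
  have memP : ∀ x : V, x ∈ Kp ↔ A x = k • x := by
    intro x
    simp [hKp, LinearMap.mem_ker, sub_eq_zero]
  have memM : ∀ x : V, x ∈ Km ↔ A x = -(k • x) := by
    intro x
    simp [hKm, LinearMap.mem_ker, add_eq_zero_iff_eq_neg]
  have hAA : ∀ x : V, A (A x) = (k ^ 2) • x := by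
    intro x
    have := LinearMap.ext_iff.mp hA2 x
    simpa using this
  -- nondegeneracy
  have hnd : ∀ x : V, (∀ y : V, Ω x y = 0) → x = 0 := by
    intro x hx
    have h1 := hx (-x.2, x.1)
    rw [homega] at h1
    have h2 : ∑ i, (x.1 i ^ 2 + x.2 i ^ 2) = 0 := by
      rw [← h1]
      refine Finset.sum_congr rfl fun i _ => ?_
      show x.1 i ^ 2 + x.2 i ^ 2 = x.1 i * x.1 i - x.2 i * (-(x.2 i))
      ring
    have h3 : ∀ i ∈ Finset.univ, x.1 i ^ 2 + x.2 i ^ 2 = 0 :=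
      (Finset.sum_eq_zero_iff_of_nonneg fun i _ => by positivity).mp h2
    have h4 : ∀ i : Fin (n + 1), x.1 i = 0 ∧ x.2 i = 0 := by
      intro i
      have hi := h3 i (Finset.mem_univ i)
      have ha : x.1 i ^ 2 = 0 := le_antisymm (by nlinarith [sq_nonneg (x.2 i)]) (sq_nonneg _)
      have hb : x.2 i ^ 2 = 0 := le_antisymm (by nlinarith [sq_nonneg (x.1 i)]) (sq_nonneg _)
      exact ⟨pow_eq_zero_iff two_ne_zero |>.mp ha, pow_eq_zero_iff two_ne_zero |>.mp hb⟩
    have : x = 0 := by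
      ext i
      · exact (h4 i).1
      · exact (h4 i).2
    exact this
  -- isotropy
  have hisoP : ∀ x ∈ Kp, ∀ y ∈ Kp, Ω x y = 0 := by
    intro x hx y hy
    have h := hsp x y
    rw [(memP x).mp hx, (memP y).mp hy] at h
    have : (2 * k) * Ω x y = 0 := by
      rw [map_smul, LinearMap.smul_apply, map_smul] at h
      simp only [smul_eq_mul] at h
      linarith
    have h2k : (2 : ℝ) * k ≠ 0 := by positivity
    exact (mul_eq_zero.mp this).resolve_left h2k
  have hisoM : ∀ x ∈ Km, ∀ y ∈ Km, Ω x y = 0 := by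
    intro x hx y hy
    have h := hsp x y
    rw [(memM x).mp hx, (memM y).mp hy] at h
    rw [map_neg, map_smul, LinearMap.neg_apply, LinearMap.smul_apply, map_neg, map_smul] at h
    simp only [smul_eq_mul] at h
    have : (2 * k) * Ω x y = 0 := by linarith
    have h2k : (2 : ℝ) * k ≠ 0 := by positivity
    exact (mul_eq_zero.mp this).resolve_left h2k
  -- decomposition
  have hsup : Kp ⊔ Km = ⊤ := by
    rw [Submodule.eq_top_iff']
    intro x
    have ha : ((2 * k)⁻¹ • (A x + k • x)) ∈ Kp := by
      refine Submodule.smul_mem _ _ ?_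
      rw [memP, map_add, hAA, map_smul, smul_add, smul_smul, pow_two]
      exact add_comm _ _
    have hb : ((2 * k)⁻¹ • (k • x - A x)) ∈ Km := by
      refine Submodule.smul_mem _ _ ?_
      rw [memM, map_sub, map_smul, hAA, smul_sub, smul_smul, neg_sub, pow_two]
    have hx : x = (2 * k)⁻¹ • (A x + k • x) + (2 * k)⁻¹ • (k • x - A x) := by
      rw [← smul_add]
      have : A x + k • x + (k • x - A x) = (2 * k) • x := by
        rw [two_mul, add_smul]; abel
      rw [this, smul_smul, inv_mul_cancel₀ (by positivity), one_smul]
    exact hx ▸ Submodule.add_mem_sup ha hb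
  have hdisj : Disjoint Kp Km := by
    rw [Submodule.disjoint_def]
    intro x hxp hxm
    have h1 := (memP x).mp hxp
    have h2 := (memM x).mp hxm
    rw [h1] at h2
    have h4 : k • x + k • x = 0 := add_eq_zero_iff_eq_neg.mpr h2
    have : (2 * k) • x = 0 := by rw [two_mul, add_smul]; exact h4
    have h2k : (2 : ℝ) * k ≠ 0 := by positivity
    exact (smul_eq_zero.mp this).resolve_left h2k
  have hcompl : IsCompl Kp Km := ⟨hdisj, codisjoint_iff.mpr hsup⟩
  -- pairing maps into duals
  have mkmap : ∀ (P Q : Submodule ℝ V), ∃ φ : P →ₗ[ℝ] Module.Dual ℝ Q,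
      ∀ (x : P) (y : Q), φ x y = Ω x y := by
    intro P Q
    refine ⟨{ toFun := fun x => (Ω x).comp Q.subtype
              map_add' := by intro a b; ext y; simp
              map_smul' := by intro c a; ext y; simp }, fun x y => rfl⟩
  obtain ⟨φ, hφ⟩ := mkmap Kp Km
  obtain ⟨ψ, hψ⟩ := mkmap Km Kp
  have hφinj : Function.Injective φ := by
    rw [← LinearMap.ker_eq_bot, LinearMap.ker_eq_bot']
    intro x hx
    have hx0 : (x : V) = 0 := by
      apply hnd
      intro y
      have hy : y ∈ Kp ⊔ Km := hsup ▸ Submodule.mem_top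
      obtain ⟨a, ha, b, hb, rfl⟩ := Submodule.mem_sup.mp hy
      rw [map_add]
      have h1 : Ω x a = 0 := hisoP x x.2 a ha
      have h2 : Ω x b = 0 := by
        have := hφ x ⟨b, hb⟩
        rw [hx] at this
        simpa using this.symm
      rw [h1, h2, add_zero]
    exact Subtype.ext hx0
  have hψinj : Function.Injective ψ := by
    rw [← LinearMap.ker_eq_bot, LinearMap.ker_eq_bot']
    intro x hx
    have hx0 : (x : V) = 0 := by
      apply hnd
      intro y
      have hy : y ∈ Kp ⊔ Km := hsup ▸ Submodule.mem_top
      obtain ⟨a, ha, b, hb, rfl⟩ := Submodule.mem_sup.mp hy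
      rw [map_add]
      have h1 : Ω x a = 0 := by
        have := hψ x ⟨a, ha⟩
        rw [hx] at this
        simpa using this.symm
      have h2 : Ω x b = 0 := hisoM x x.2 b hb
      rw [h1, h2, add_zero]
    exact Subtype.ext hx0
  -- dimensions
  have hle1 : Module.finrank ℝ Kp ≤ Module.finrank ℝ Km := by
    have := LinearMap.finrank_le_finrank_of_injective hφinj
    rwa [Subspace.dual_finrank_eq] at this
  have hle2 : Module.finrank ℝ Km ≤ Module.finrank ℝ Kp := by
    have := LinearMap.finrank_le_finrank_of_injective hψinj
    rwa [Subspace.dual_finrank_eq] at this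
  have heq : Module.finrank ℝ Kp = Module.finrank ℝ Km := le_antisymm hle1 hle2
  have hsum : Module.finrank ℝ Kp + Module.finrank ℝ Km = 2 * (n + 1) := by
    rw [Submodule.finrank_add_eq_of_isCompl hcompl]
    simp [hV, Module.finrank_prod, Module.finrank_fin_fun]
    ring
  have hdimP : Module.finrank ℝ Kp = n + 1 := by omega
  have hdimM : Module.finrank ℝ Km = n + 1 := by omega
  -- eigenvalues
  have hPne : Kp ≠ ⊥ := by
    intro h
    rw [h] at hdimP
    simp at hdimP
  have hMne : Km ≠ ⊥ := by
    intro h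
    rw [h] at hdimM
    simp at hdimM
  obtain ⟨xp, hxp, hxp0⟩ := Submodule.exists_mem_ne_zero_of_ne_bot hPne
  obtain ⟨xm, hxm, hxm0⟩ := Submodule.exists_mem_ne_zero_of_ne_bot hMne
  have hev1 : Module.End.HasEigenvalue A k :=
    Module.End.hasEigenvalue_of_hasEigenvector
      ⟨Module.End.mem_eigenspace_iff.mpr ((memP xp).mp hxp), hxp0⟩
  have hev2 : Module.End.HasEigenvalue A (-k) :=
    Module.End.hasEigenvalue_of_hasEigenvector
      ⟨Module.End.mem_eigenspace_iff.mpr (by rw [(memM xm).mp hxm, neg_smul]), hxm0⟩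
  exact ⟨hev1, hev2, hcompl, hisoP, hisoM, hdimP, hdimM⟩
end

section
/- Let A ∈ sp(2(n+1),ℝ) with A ≠ 0, A² = μ·Id, Σ_A ≠ ∅, and let G₁ = {g ∈ Sp(2(n+1),ℝ) : gA = Ag}. If B ∈ G₁ has the property that for every x ∈ Σ_A there is t_x ∈ ℝ with Bx = exp(t_x A)x, then B = exp(τA) for some τ ∈ ℝ. -/
open Matrix

/-- The standard symplectic matrix `J` on `ℝ^{n} ⊕ ℝ^{n}`. -/
def stdJ (n : ℕ) : Matrix (Fin n ⊕ Fin n) (Fin n ⊕ Fin n) ℝ :=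
  Matrix.fromBlocks 0 1 (-1) 0

/-- The standard symplectic form on `ℝ^{n} ⊕ ℝ^{n}`, `Ω(x,y) = ⟨x, J y⟩`. -/
def stdOm (n : ℕ) (x y : Fin n ⊕ Fin n → ℝ) : ℝ :=
  x ⬝ᵥ (stdJ n *ᵥ y)

section Aux

variable {m : ℕ}

lemma stdJ_mul_stdJ (m : ℕ) : stdJ m * stdJ m = -1 := by
  rw [stdJ, Matrix.fromBlocks_multiply, ← Matrix.fromBlocks_one,
    Matrix.fromBlocks_neg]
  simp

lemma stdJ_transpose (m : ℕ) : (stdJ m)ᵀ = -stdJ m := by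
  rw [stdJ, Matrix.fromBlocks_transpose, Matrix.fromBlocks_neg]
  simp

lemma om_add_left (x y z : Fin m ⊕ Fin m → ℝ) :
    stdOm m (x + y) z = stdOm m x z + stdOm m y z := add_dotProduct _ _ _

lemma om_add_right (x y z : Fin m ⊕ Fin m → ℝ) :
    stdOm m x (y + z) = stdOm m x y + stdOm m x z := by
  unfold stdOm; rw [Matrix.mulVec_add, dotProduct_add]

lemma om_smul_left (c : ℝ) (x z : Fin m ⊕ Fin m → ℝ) :
    stdOm m (c • x) z = c * stdOm m x z := smul_dotProduct _ _ _

lemma om_smul_right (c : ℝ) (x z : Fin m ⊕ Fin m → ℝ) :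
    stdOm m x (c • z) = c * stdOm m x z := by
  unfold stdOm; rw [Matrix.mulVec_smul, dotProduct_smul]; rfl

lemma om_skew (x y : Fin m ⊕ Fin m → ℝ) : stdOm m x y = -stdOm m y x := by
  unfold stdOm
  rw [Matrix.dotProduct_mulVec, ← Matrix.mulVec_transpose, stdJ_transpose,
    Matrix.neg_mulVec, neg_dotProduct, dotProduct_comm]

lemma om_self (x : Fin m ⊕ Fin m → ℝ) : stdOm m x x = 0 := by
  have := om_skew x x; linarith

lemma om_zero_right (x : Fin m ⊕ Fin m → ℝ) : stdOm m x 0 = 0 := by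
  unfold stdOm; rw [Matrix.mulVec_zero, dotProduct_zero]

lemma om_zero_left (x : Fin m ⊕ Fin m → ℝ) : stdOm m 0 x = 0 :=
  zero_dotProduct _

lemma om_J (w : Fin m ⊕ Fin m → ℝ) : stdOm m w (stdJ m *ᵥ w) = -(w ⬝ᵥ w) := by
  unfold stdOm
  rw [Matrix.mulVec_mulVec, stdJ_mul_stdJ, Matrix.neg_mulVec, Matrix.one_mulVec,
    dotProduct_neg]

lemma om_ne_zero_of_ne_zero {w : Fin m ⊕ Fin m → ℝ} (hw : w ≠ 0) :
    stdOm m w (stdJ m *ᵥ w) ≠ 0 := by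
  rw [om_J]
  simpa using hw

/-- Given finitely many nonzero vectors, there is a vector pairing nontrivially
with all of them. -/
lemma exists_om_ne_zero (l : List (Fin m ⊕ Fin m → ℝ)) (hl : ∀ w ∈ l, w ≠ 0) :
    ∃ v, ∀ w ∈ l, stdOm m w v ≠ 0 := by
  induction l with
  | nil => exact ⟨0, by simp⟩
  | cons w l ih =>
    obtain ⟨v, hv⟩ := ih fun w' hw' => hl w' (List.mem_cons_of_mem _ hw')
    set u := stdJ m *ᵥ w with hu
    have huw : stdOm m w u ≠ 0 := om_ne_zero_of_ne_zero (hl w (List.mem_cons_self))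
    set T : Set ℝ := ⋃ w' ∈ (w :: l : List _), {t : ℝ | stdOm m w' v + t * stdOm m w' u = 0}
      with hT
    have hTfin : T.Finite := by
      refine Set.Finite.biUnion (List.finite_toSet _) ?_
      intro w' hw'
      have hkey : stdOm m w' v ≠ 0 ∨ stdOm m w' u ≠ 0 := by
        rcases List.mem_cons.mp hw' with h | h
        · right; rw [h]; exact huw
        · left; exact hv w' h
      apply Set.Subsingleton.finite
      intro t₁ h₁ t₂ h₂
      simp only [Set.mem_setOf_eq] at h₁ h₂
      have h3 : (t₁ - t₂) * stdOm m w' u = 0 := by linear_combination h₁ - h₂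
      rcases mul_eq_zero.mp h3 with h | h
      · exact sub_eq_zero.mp h
      · rcases hkey with hk | hk
        · rw [h, mul_zero, add_zero] at h₁; exact absurd h₁ hk
        · exact absurd h hk
    obtain ⟨t, ht⟩ := hTfin.infinite_compl.nonempty
    refine ⟨v + t • u, ?_⟩
    intro w' hw'
    have htT : t ∉ T := ht
    rw [hT] at htT
    simp only [Set.mem_iUnion, Set.mem_setOf_eq, not_exists] at htT
    rw [om_add_right, om_smul_right]
    intro h0
    exact (by simpa [hw'] using htT w' : ¬ _) (by linarith)

/-- The exponential of a multiple of `A` with `A² = μ·1` lies in `span {1, A}`. -/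
lemma exp_mem_span {μ : ℝ} {A : Matrix (Fin m ⊕ Fin m) (Fin m ⊕ Fin m) ℝ}
    (hA2 : A * A = μ • (1 : Matrix (Fin m ⊕ Fin m) (Fin m ⊕ Fin m) ℝ)) (t : ℝ) :
    ∃ f g : ℝ, NormedSpace.exp (t • A)
      = f • (1 : Matrix (Fin m ⊕ Fin m) (Fin m ⊕ Fin m) ℝ) + g • A := by
  set S : Submodule ℝ (Matrix (Fin m ⊕ Fin m) (Fin m ⊕ Fin m) ℝ) :=
    Submodule.span ℝ {(1 : Matrix (Fin m ⊕ Fin m) (Fin m ⊕ Fin m) ℝ), A} with hS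
  have hpow : ∀ k : ℕ, A ^ k ∈ S ∧ A ^ (k + 1) ∈ S := by
    intro k
    induction k with
    | zero =>
      constructor
      · simpa using Submodule.subset_span
          (by simp : (1 : Matrix (Fin m ⊕ Fin m) (Fin m ⊕ Fin m) ℝ)
            ∈ ({1, A} : Set (Matrix (Fin m ⊕ Fin m) (Fin m ⊕ Fin m) ℝ)))
      · simpa using Submodule.subset_span
          (by simp : A ∈ ({1, A} : Set (Matrix (Fin m ⊕ Fin m) (Fin m ⊕ Fin m) ℝ)))
    | succ k ih =>
      refine ⟨ih.2, ?_⟩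
      have h1 : A ^ (k + 1 + 1) = A ^ k * (A * A) := by
        rw [pow_succ, pow_succ, mul_assoc]
      rw [h1, hA2, Matrix.mul_smul, mul_one]
      exact S.smul_mem μ ih.1
  have hmem : ∀ k : ℕ, ((Nat.factorial k : ℝ)⁻¹) • (t • A) ^ k ∈ S := by
    intro k
    rw [smul_pow]
    exact S.smul_mem _ (S.smul_mem _ (hpow k).1)
  have hclosed : IsClosed (S : Set (Matrix (Fin m ⊕ Fin m) (Fin m ⊕ Fin m) ℝ)) :=
    S.closed_of_finiteDimensional
  have hexp : NormedSpace.exp (t • A)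
      = ∑' k : ℕ, ((Nat.factorial k : ℝ)⁻¹) • (t • A) ^ k := by
    rw [NormedSpace.exp_eq_tsum ℝ]
  have hin : NormedSpace.exp (t • A) ∈ S := by
    rw [hexp]
    by_cases h : Summable (fun k : ℕ => ((Nat.factorial k : ℝ)⁻¹) • (t • A) ^ k)
    · exact hclosed.mem_of_tendsto h.hasSum.tendsto_sum_nat
        (Filter.Eventually.of_forall fun k => Submodule.sum_mem S fun i _ => hmem i)
    · rw [tsum_eq_zero_of_not_summable h]; exact S.zero_mem
  obtain ⟨f, g, hfg⟩ := Submodule.mem_span_pair.mp hin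
  exact ⟨f, g, hfg.symm⟩

end Aux

set_option maxHeartbeats 1600000 in
/-- Let `A ∈ sp(2(n+1),ℝ)`, `A ≠ 0`, `A² = μ·Id`, `Σ_A ≠ ∅`, and let
`B ∈ Sp(2(n+1),ℝ)` commute with `A`.  If for every `x ∈ Σ_A` there is `t_x ∈ ℝ` with
`Bx = exp(t_x A)x`, then `B = exp(τA)` for some `τ ∈ ℝ`. -/
theorem kernel_of_alpha_is_exp_tA
    (n : ℕ) (μ : ℝ)
    (A B : Matrix (Fin (n + 1) ⊕ Fin (n + 1)) (Fin (n + 1) ⊕ Fin (n + 1)) ℝ)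
    (hA : A ≠ 0)
    (hsp : ∀ x y, stdOm (n + 1) (A *ᵥ x) y + stdOm (n + 1) x (A *ᵥ y) = 0)
    (hA2 : A * A = μ • (1 : Matrix _ _ ℝ))
    (hSig : ∃ x, stdOm (n + 1) x (A *ᵥ x) = 1)
    (hBsymp : ∀ x y, stdOm (n + 1) (B *ᵥ x) (B *ᵥ y) = stdOm (n + 1) x y)
    (hBA : B * A = A * B)
    (hfix : ∀ x, stdOm (n + 1) x (A *ᵥ x) = 1 →
      ∃ t : ℝ, B *ᵥ x = NormedSpace.exp (t • A) *ᵥ x) :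
    ∃ τ : ℝ, B = NormedSpace.exp (τ • A) := by
  obtain ⟨x₀, hx₀⟩ := hSig
  set Qf : (Fin (n + 1) ⊕ Fin (n + 1) → ℝ) → ℝ :=
    fun v => stdOm (n + 1) v (A *ᵥ v) with hQf
  -- basic toolkit
  have omA : ∀ x y, stdOm (n + 1) (A *ᵥ x) y = -stdOm (n + 1) x (A *ᵥ y) := by
    intro x y; linarith [hsp x y]
  have hAA : ∀ y, A *ᵥ (A *ᵥ y) = μ • y := by
    intro y
    rw [Matrix.mulVec_mulVec, hA2, Matrix.smul_mulVec, Matrix.one_mulVec]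
  have hBAv : ∀ v, B *ᵥ (A *ᵥ v) = A *ᵥ (B *ᵥ v) := by
    intro v
    rw [Matrix.mulVec_mulVec, Matrix.mulVec_mulVec, hBA]
  have omAA : ∀ x y, stdOm (n + 1) (A *ᵥ x) (A *ᵥ y) = -(μ * stdOm (n + 1) x y) := by
    intro x y
    rw [omA, hAA, om_smul_right]
  -- master expansion of the form on the "basis" x, Ax, y, Ay
  have omexp : ∀ (p q r t : ℝ) (x y : Fin (n + 1) ⊕ Fin (n + 1) → ℝ),
      stdOm (n + 1) (p • x + q • (A *ᵥ x)) (r • y + t • (A *ᵥ y))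
        = (p * r - μ * q * t) * stdOm (n + 1) x y
          + (p * t - q * r) * stdOm (n + 1) x (A *ᵥ y) := by
    intro p q r t x y
    simp only [om_add_left, om_add_right, om_smul_left, om_smul_right]
    rw [omA x y, omAA x y]
    ring
  have hQB : ∀ v, Qf (B *ᵥ v) = Qf v := by
    intro v
    simp only [hQf]
    rw [← hBAv, hBsymp]
  have hQsmul : ∀ (c : ℝ) v, Qf (c • v) = c ^ 2 * Qf v := by
    intro c v
    simp only [hQf]
    rw [Matrix.mulVec_smul, om_smul_left, om_smul_right]
    ring
  have hQexp : ∀ (x v : Fin (n + 1) ⊕ Fin (n + 1) → ℝ) (t : ℝ),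
      Qf (x + t • v) = Qf x
        + t * (stdOm (n + 1) x (A *ᵥ v) + stdOm (n + 1) v (A *ᵥ x)) + t ^ 2 * Qf v := by
    intro x v t
    simp only [hQf]
    rw [Matrix.mulVec_add, Matrix.mulVec_smul]
    simp only [om_add_left, om_add_right, om_smul_left, om_smul_right]
    ring
  -- uniqueness of coefficients
  have huniq : ∀ x, Qf x ≠ 0 → ∀ a b : ℝ,
      a • x + b • (A *ᵥ x) = 0 → a = 0 ∧ b = 0 := by
    intro x hx a b h
    have h1 : stdOm (n + 1) (a • x + b • (A *ᵥ x)) (A *ᵥ x) = 0 := by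
      rw [h, om_zero_left]
    rw [om_add_left, om_smul_left, om_smul_left, om_self, mul_zero, add_zero] at h1
    have ha : a = 0 := by
      rcases mul_eq_zero.mp h1 with h' | h'
      · exact h'
      · exact absurd h' hx
    have h2 : stdOm (n + 1) x (a • x + b • (A *ᵥ x)) = 0 := by
      rw [h, om_zero_right]
    rw [om_add_right, om_smul_right, om_smul_right, om_self, mul_zero, zero_add] at h2
    have hb : b = 0 := by
      rcases mul_eq_zero.mp h2 with h' | h'
      · exact h'
      · exact absurd h' hx
    exact ⟨ha, hb⟩
  -- every element of the positive cone has exponential-type coefficients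
  have hcoeff : ∀ x, 0 < Qf x → ∃ a b : ℝ,
      B *ᵥ x = a • x + b • (A *ᵥ x) ∧ a ^ 2 - μ * b ^ 2 = 1 := by
    intro x hq
    set c := Real.sqrt (Qf x) with hc
    have hcpos : 0 < c := Real.sqrt_pos.mpr hq
    have hc2 : c * c = Qf x := Real.mul_self_sqrt hq.le
    set x' := c⁻¹ • x with hx'
    have hQx' : Qf x' = 1 := by
      rw [hx', hQsmul]
      field_simp
      rw [sq]; exact hc2.symm
    obtain ⟨t, ht⟩ := hfix x' hQx'
    obtain ⟨f, g, hfg⟩ := exp_mem_span hA2 t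
    have hBx' : B *ᵥ x' = f • x' + g • (A *ᵥ x') := by
      rw [ht, hfg, Matrix.add_mulVec, Matrix.smul_mulVec,
        Matrix.smul_mulVec, Matrix.one_mulVec]
    refine ⟨f, g, ?_, ?_⟩
    · have hxc : x = c • x' := by
        rw [hx', smul_smul, mul_inv_cancel₀ hcpos.ne', one_smul]
      rw [hxc]
      simp only [Matrix.mulVec_smul]
      rw [hBx']
      module
    · have hog : A *ᵥ (f • x' + g • (A *ᵥ x')) = (g * μ) • x' + f • (A *ᵥ x') := by
        simp only [Matrix.mulVec_add, Matrix.mulVec_smul, hAA, smul_smul]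
        module
      have h1 : Qf (B *ᵥ x') = 1 := by rw [hQB, hQx']
      rw [hBx'] at h1
      simp only [hQf] at h1
      rw [hog, omexp, om_self] at h1
      have h2 : stdOm (n + 1) x' (A *ᵥ x') = 1 := by simpa [hQf] using hQx'
      rw [h2] at h1
      linear_combination h1
  -- rigidity: two points of the cone that are symplectically coupled have the
  -- same coefficients
  have hpair : ∀ (x y : Fin (n + 1) ⊕ Fin (n + 1) → ℝ) (a b a' b' : ℝ),
      B *ᵥ x = a • x + b • (A *ᵥ x) → a ^ 2 - μ * b ^ 2 = 1 →
      B *ᵥ y = a' • y + b' • (A *ᵥ y) → a' ^ 2 - μ * b' ^ 2 = 1 →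
      (stdOm (n + 1) x (A *ᵥ y)) ^ 2 ≠ μ * (stdOm (n + 1) x y) ^ 2 →
      a = a' ∧ b = b' := by
    intro x y a b a' b' hx hnx hy hny hcond
    set u := stdOm (n + 1) x y with hu
    set v := stdOm (n + 1) x (A *ᵥ y) with hv
    have E1 : (a * a' - μ * b * b') * u + (a * b' - b * a') * v = u := by
      have h := hBsymp x y
      rw [hx, hy, omexp] at h
      exact h
    have E2 : (a * (b' * μ) - μ * b * a') * u + (a * a' - b * (b' * μ)) * v = v := by
      have h := hBsymp x (A *ᵥ y)
      rw [hx, hBAv, hy] at h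
      have hvec : A *ᵥ (a' • y + b' • (A *ᵥ y)) = (b' * μ) • y + a' • (A *ᵥ y) := by
        simp only [Matrix.mulVec_add, Matrix.mulVec_smul, hAA, smul_smul]
        module
      rw [hvec, omexp] at h
      exact h
    have hd : v ^ 2 - μ * u ^ 2 ≠ 0 := sub_ne_zero.mpr hcond
    have hR0 : a * b' - a' * b = 0 := by
      have h0 : (a * b' - a' * b) * (v ^ 2 - μ * u ^ 2) = 0 := by
        linear_combination v * E1 - u * E2
      rcases mul_eq_zero.mp h0 with h | h
      · exact h
      · exact absurd h hd
    have hPu : (a * a' - μ * b * b' - 1) * u = 0 := by linear_combination E1 - v * hR0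
    have hPv : (a * a' - μ * b * b' - 1) * v = 0 := by
      linear_combination E2 - μ * u * hR0
    have hP0 : a * a' - μ * b * b' = 1 := by
      by_contra hne
      have hne' : a * a' - μ * b * b' - 1 ≠ 0 := fun h => hne (by linarith)
      have hu0 : u = 0 := by
        rcases mul_eq_zero.mp hPu with h | h
        · exact absurd h hne'
        · exact h
      have hv0 : v = 0 := by
        rcases mul_eq_zero.mp hPv with h | h
        · exact absurd h hne'
        · exact h
      apply hd
      rw [hu0, hv0]
      ring
    constructor
    · linear_combination a' * hnx - μ * b * hR0 - a * hP0
    · linear_combination b' * hnx - a * hR0 - b * hP0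
  have hQx₀ : Qf x₀ = 1 := hx₀
  obtain ⟨a₀, b₀, hB₀, hn₀⟩ := hcoeff x₀ (by rw [hQx₀]; norm_num)
  set s : ℝ := Real.sqrt μ with hs
  have hwnz : ∀ z, 0 < Qf z → ∀ c : ℝ, A *ᵥ z + c • z ≠ 0 := by
    intro z hz c h0
    have hAz : A *ᵥ z = (-c) • z := by
      rw [neg_smul]
      exact eq_neg_of_add_eq_zero_left h0
    have : Qf z = 0 := by
      simp only [hQf]
      rw [hAz, om_smul_right, om_self, mul_zero]
    rw [this] at hz
    exact lt_irrefl 0 hz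
  -- coupling deduction from nonvanishing of the two linear forms
  have hcoup : ∀ x y : Fin (n + 1) ⊕ Fin (n + 1) → ℝ,
      stdOm (n + 1) (A *ᵥ x + (-s) • x) y ≠ 0 →
      stdOm (n + 1) (A *ᵥ x + s • x) y ≠ 0 →
      (stdOm (n + 1) x (A *ᵥ y)) ^ 2 ≠ μ * (stdOm (n + 1) x y) ^ 2 := by
    intro x y h1 h2
    rw [om_add_left, om_smul_left, omA] at h1 h2
    set d := stdOm (n + 1) x (A *ᵥ y) with hd
    set u := stdOm (n + 1) x y with hu'
    rcases le_or_gt 0 μ with hμ | hμ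
    · have hss : s * s = μ := Real.mul_self_sqrt hμ
      intro heq
      exact mul_ne_zero h1 h2 (by linear_combination heq - u ^ 2 * hss)
    · have hs0 : s = 0 := by
        rw [hs]
        exact Real.sqrt_eq_zero_of_nonpos hμ.le
      rw [hs0] at h1
      have hdne : d ≠ 0 := by
        intro h0
        rw [h0] at h1
        simp at h1
      intro heq
      have hd2 : 0 < d ^ 2 := by positivity
      nlinarith [sq_nonneg u]
  -- all points of the positive cone have the same coefficients
  have hconst : ∀ x, 0 < Qf x → B *ᵥ x = a₀ • x + b₀ • (A *ᵥ x) := by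
    intro x hqx
    obtain ⟨a, b, hBx, hnx⟩ := hcoeff x hqx
    set l : List (Fin (n + 1) ⊕ Fin (n + 1) → ℝ) :=
      [A *ᵥ x + (-s) • x, A *ᵥ x + s • x, A *ᵥ x₀ + (-s) • x₀, A *ᵥ x₀ + s • x₀] with hl
    obtain ⟨v, hv⟩ := exists_om_ne_zero l (by
      intro w hw'
      simp only [hl, List.mem_cons, List.not_mem_nil, or_false] at hw'
      rcases hw' with h | h | h | h <;> subst h
      · exact hwnz x hqx _
      · exact hwnz x hqx _
      · exact hwnz x₀ (by rw [hQx₀]; norm_num) _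
      · exact hwnz x₀ (by rw [hQx₀]; norm_num) _)
    set c₁ : ℝ := stdOm (n + 1) x (A *ᵥ v) + stdOm (n + 1) v (A *ᵥ x) with hc₁
    set c₂ : ℝ := Qf v with hc₂
    set δ : ℝ := min 1 (Qf x / (|c₁| + |c₂| + 1)) with hδ
    have hδpos : 0 < δ := by
      apply lt_min one_pos
      apply div_pos hqx
      positivity
    set T : Set ℝ := ⋃ w ∈ l, {t : ℝ | stdOm (n + 1) w x + t * stdOm (n + 1) w v = 0}
      with hT
    have hTfin : T.Finite := by
      refine Set.Finite.biUnion (List.finite_toSet _) ?_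
      intro w hw'
      apply Set.Subsingleton.finite
      intro t₁ h₁ t₂ h₂
      simp only [Set.mem_setOf_eq] at h₁ h₂
      have h3 : (t₁ - t₂) * stdOm (n + 1) w v = 0 := by linear_combination h₁ - h₂
      rcases mul_eq_zero.mp h3 with h | h
      · exact sub_eq_zero.mp h
      · exact absurd h (hv w hw')
    obtain ⟨t, ht⟩ := ((Set.Ioo_infinite hδpos).diff hTfin).nonempty
    obtain ⟨⟨ht0, htδ⟩, htT⟩ := ht
    set y := x + t • v with hy
    have hQy : 0 < Qf y := by
      rw [hy, hQexp, ← hc₁, ← hc₂]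
      have ht1 : t ≤ 1 := le_of_lt (lt_of_lt_of_le htδ (min_le_left _ _))
      have ht2 : t < Qf x / (|c₁| + |c₂| + 1) := lt_of_lt_of_le htδ (min_le_right _ _)
      have hS : (0:ℝ) < |c₁| + |c₂| + 1 := by positivity
      have ht3 : t * (|c₁| + |c₂| + 1) < Qf x := by
        rw [div_eq_mul_inv] at ht2
        calc t * (|c₁| + |c₂| + 1) < Qf x * (|c₁| + |c₂| + 1)⁻¹ * (|c₁| + |c₂| + 1) := by
              exact mul_lt_mul_of_pos_right ht2 hS
          _ = Qf x := by field_simp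
      have e1 : t * -|c₁| ≤ t * c₁ := mul_le_mul_of_nonneg_left (neg_abs_le c₁) ht0.le
      have e2a : t ^ 2 * -|c₂| ≤ t ^ 2 * c₂ :=
        mul_le_mul_of_nonneg_left (neg_abs_le c₂) (sq_nonneg t)
      have htsq : t ^ 2 ≤ t := by nlinarith
      have e2b : t ^ 2 * |c₂| ≤ t * |c₂| := mul_le_mul_of_nonneg_right htsq (abs_nonneg c₂)
      linarith
    have hyform : ∀ w ∈ l, stdOm (n + 1) w y ≠ 0 := by
      intro w hw'
      rw [hy, om_add_right, om_smul_right]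
      intro h0
      apply htT
      rw [hT]
      simp only [Set.mem_iUnion, Set.mem_setOf_eq]
      exact ⟨w, hw', by linarith⟩
    obtain ⟨ay, cy, hBy, hny⟩ := hcoeff y hQy
    have hcxy : (stdOm (n + 1) x (A *ᵥ y)) ^ 2 ≠ μ * (stdOm (n + 1) x y) ^ 2 :=
      hcoup x y (hyform _ (by simp [hl])) (hyform _ (by simp [hl]))
    have hcx0y : (stdOm (n + 1) x₀ (A *ᵥ y)) ^ 2 ≠ μ * (stdOm (n + 1) x₀ y) ^ 2 :=
      hcoup x₀ y (hyform _ (by simp [hl])) (hyform _ (by simp [hl]))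
    obtain ⟨ha, hb⟩ := hpair x y a b ay cy hBx hnx hBy hny hcxy
    obtain ⟨ha0, hb0⟩ := hpair x₀ y a₀ b₀ ay cy hB₀ hn₀ hBy hny hcx0y
    rw [hBx, ha.trans ha0.symm, hb.trans hb0.symm]
  -- the coefficients identity extends to the whole space
  have hAll : ∀ y, B *ᵥ y = a₀ • y + b₀ • (A *ᵥ y) := by
    intro y
    set c₁ : ℝ := stdOm (n + 1) x₀ (A *ᵥ y) + stdOm (n + 1) y (A *ᵥ x₀) with hc₁
    set c₂ : ℝ := Qf y with hc₂
    set t : ℝ := (|c₁| + |c₂| + 1)⁻¹ with htt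
    have htpos : 0 < t := by positivity
    have hQ : 0 < Qf (x₀ + t • y) := by
      rw [hQexp, ← hc₁, ← hc₂, hQx₀]
      have hone : (1:ℝ) ≤ |c₁| + |c₂| + 1 := by
        linarith [abs_nonneg c₁, abs_nonneg c₂]
      have ht1 : t ≤ 1 := by
        rw [htt]
        exact inv_le_one_of_one_le₀ hone
      have ht3 : t * (|c₁| + |c₂| + 1) = 1 := by
        rw [htt]
        field_simp
      have e1 : t * -|c₁| ≤ t * c₁ := mul_le_mul_of_nonneg_left (neg_abs_le c₁) htpos.le
      have e2a : t ^ 2 * -|c₂| ≤ t ^ 2 * c₂ :=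
        mul_le_mul_of_nonneg_left (neg_abs_le c₂) (sq_nonneg t)
      have htsq : t ^ 2 ≤ t := by nlinarith
      have e2b : t ^ 2 * |c₂| ≤ t * |c₂| := mul_le_mul_of_nonneg_right htsq (abs_nonneg c₂)
      linarith
    have h1 := hconst (x₀ + t • y) hQ
    have h2 := hconst x₀ (by rw [hQx₀]; norm_num)
    have h3 : B *ᵥ x₀ + t • (B *ᵥ y)
        = (a₀ • x₀ + b₀ • (A *ᵥ x₀)) + t • (a₀ • y + b₀ • (A *ᵥ y)) := by
      calc B *ᵥ x₀ + t • (B *ᵥ y) = B *ᵥ (x₀ + t • y) := by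
            rw [Matrix.mulVec_add, Matrix.mulVec_smul]
        _ = a₀ • (x₀ + t • y) + b₀ • (A *ᵥ (x₀ + t • y)) := h1
        _ = (a₀ • x₀ + b₀ • (A *ᵥ x₀)) + t • (a₀ • y + b₀ • (A *ᵥ y)) := by
            rw [Matrix.mulVec_add, Matrix.mulVec_smul]
            module
    rw [h2] at h3
    have h4 := add_left_cancel h3
    exact smul_right_injective _ htpos.ne' h4
  -- identify the coefficients with those of the exponential
  obtain ⟨τ, hτ⟩ := hfix x₀ hx₀
  obtain ⟨f, g, hfg⟩ := exp_mem_span hA2 τ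
  have hBx₀2 : B *ᵥ x₀ = f • x₀ + g • (A *ᵥ x₀) := by
    rw [hτ, hfg, Matrix.add_mulVec, Matrix.smul_mulVec,
      Matrix.smul_mulVec, Matrix.one_mulVec]
  have he : a₀ • x₀ + b₀ • (A *ᵥ x₀) = f • x₀ + g • (A *ᵥ x₀) := by
    rw [← hB₀, hBx₀2]
  have h0 : (a₀ - f) • x₀ + (b₀ - g) • (A *ᵥ x₀) = 0 := by
    calc (a₀ - f) • x₀ + (b₀ - g) • (A *ᵥ x₀)
        = (a₀ • x₀ + b₀ • (A *ᵥ x₀)) - (f • x₀ + g • (A *ᵥ x₀)) := by module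
      _ = 0 := by rw [he, sub_self]
  obtain ⟨hf, hg⟩ := huniq x₀ (by rw [hQx₀]; norm_num) _ _ h0
  refine ⟨τ, ?_⟩
  have hvec : ∀ y, B *ᵥ y = NormedSpace.exp (τ • A) *ᵥ y := by
    intro y
    rw [hfg, Matrix.add_mulVec, Matrix.smul_mulVec, Matrix.smul_mulVec,
      Matrix.one_mulVec, hAll y, sub_eq_zero.mp hf, sub_eq_zero.mp hg]
  ext i j
  have h := congrFun (hvec (Pi.single j 1)) i
  simpa [Matrix.mulVec_single] using h
end

section
/- For x ∈ Σ_A = {y : Ω(y,Ay)=1}, define S_x(y) = -y + 2Ω(y,Ax)x - 2Ω(y,x)Ax. Then S_x is a symplectic linear map (S_x ∈ Sp(2(n+1),ℝ)), S_x² = Id, S_x commutes with A, S_x(x) = x, and S_x preserves Σ_A. -/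
open Finset

/-- For `x ∈ Σ_A = {y : Ω(y,Ay) = 1}`, the map
`S_x(y) = -y + 2Ω(y,Ax)·x - 2Ω(y,x)·Ax` is symplectic, involutive, commutes with `A`, fixes `x`,
and preserves `Σ_A`. -/
theorem symmetry_Sx_properties
    (n : ℕ) (μ : ℝ)
    (A : ((Fin (n + 1) → ℝ) × (Fin (n + 1) → ℝ)) →ₗ[ℝ]
         ((Fin (n + 1) → ℝ) × (Fin (n + 1) → ℝ)))
    (hsp : ∀ x y, stdOmega (n + 1) (A x) y + stdOmega (n + 1) x (A y) = 0)
    (hA2 : A ∘ₗ A = μ • LinearMap.id)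
    (x : (Fin (n + 1) → ℝ) × (Fin (n + 1) → ℝ))
    (hx : stdOmega (n + 1) x (A x) = 1) :
    let S : ((Fin (n + 1) → ℝ) × (Fin (n + 1) → ℝ)) → ((Fin (n + 1) → ℝ) × (Fin (n + 1) → ℝ)) :=
      fun y => -y + (2 * stdOmega (n + 1) y (A x)) • x - (2 * stdOmega (n + 1) y x) • (A x)
    (∀ y z, stdOmega (n + 1) (S y) (S z) = stdOmega (n + 1) y z) ∧
    (∀ y, S (S y) = y) ∧
    (∀ y, S (A y) = A (S y)) ∧
    S x = x ∧
    (∀ y, stdOmega (n + 1) y (A y) = 1 → stdOmega (n + 1) (S y) (A (S y)) = 1) := by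

  intro S
  have hskew : ∀ a b, stdOmega (n + 1) a b = - stdOmega (n + 1) b a := by
    intro a b
    simp only [stdOmega, LinearMap.mk₂_apply, ← Finset.sum_neg_distrib]
    exact Finset.sum_congr rfl fun i _ => by ring
  have hxx : stdOmega (n + 1) x x = 0 := by have := hskew x x; linarith
  have hAxx : stdOmega (n + 1) (A x) x = -1 := by rw [hskew (A x) x, hx]
  have hAxAx : stdOmega (n + 1) (A x) (A x) = 0 := by
    have := hskew (A x) (A x); linarith
  have hsp' : ∀ a b, stdOmega (n + 1) (A a) b = - stdOmega (n + 1) a (A b) := by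
    intro a b; have := hsp a b; linarith
  have hAA : ∀ y, A (A y) = μ • y := by
    intro y
    have := LinearMap.ext_iff.mp hA2 y
    simpa using this
  have hsymp : ∀ y z, stdOmega (n + 1) (S y) (S z) = stdOmega (n + 1) y z := by
    intro y z
    simp only [S, map_add, map_sub, map_neg, map_smul, LinearMap.add_apply,
      LinearMap.sub_apply, LinearMap.neg_apply, LinearMap.smul_apply, smul_eq_mul]
    rw [hskew x z, hskew (A x) z, hx, hxx, hAxx, hAxAx]
    rw [hskew x (A x)] at *
    ring
  have hinv : ∀ y, S (S y) = y := by
    intro y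
    have c1 : stdOmega (n + 1) (S y) (A x) = stdOmega (n + 1) y (A x) := by
      simp only [S, map_add, map_sub, map_neg, map_smul, LinearMap.add_apply,
        LinearMap.sub_apply, LinearMap.neg_apply, LinearMap.smul_apply, smul_eq_mul]
      rw [hx, hAxAx]; ring
    have c2 : stdOmega (n + 1) (S y) x = stdOmega (n + 1) y x := by
      simp only [S, map_add, map_sub, map_neg, map_smul, LinearMap.add_apply,
        LinearMap.sub_apply, LinearMap.neg_apply, LinearMap.smul_apply, smul_eq_mul]
      rw [hxx, hAxx]; ring
    have h0 : S (S y) = -(S y) + (2 * stdOmega (n + 1) (S y) (A x)) • x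
        - (2 * stdOmega (n + 1) (S y) x) • (A x) := rfl
    rw [h0, c1, c2]
    simp only [S]
    module
  have hcomm : ∀ y, S (A y) = A (S y) := by
    intro y
    have d1 : stdOmega (n + 1) (A y) (A x) = -(μ * stdOmega (n + 1) y x) := by
      rw [hsp' y (A x), hAA x, map_smul, smul_eq_mul]
    have d2 : stdOmega (n + 1) (A y) x = - stdOmega (n + 1) y (A x) := hsp' y x
    show S (A y) = A (S y)
    simp only [S]
    rw [d1, d2]
    simp only [map_add, map_sub, map_neg, map_smul, hAA x]
    module
  have hfix : S x = x := by
    show -x + (2 * stdOmega (n + 1) x (A x)) • x - (2 * stdOmega (n + 1) x x) • (A x) = x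
    rw [hx, hxx]
    module
  refine ⟨hsymp, hinv, hcomm, hfix, ?_⟩
  intro y hy
  rw [← hcomm y, hsymp y (A y)]
  exact hy
end

section
/- Let G be a connected semisimple Lie group with Iwasawa decomposition G = KAN and let φ: a → m be a homomorphism into the centralizer m of a in k. Let A_φ be the analytic subgroup with Lie algebra a_φ = {X+φ(X) : X ∈ a}. Then every g ∈ G factors uniquely as g = k a' n with k ∈ K, a' ∈ A_φ, n ∈ N, and H_φ = A_φ N is a closed solvable subgroup of G acting simply transitively on G/K. -/
/-- Let `G = KAN` be a (global) Iwasawa decomposition of a connected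
semisimple Lie group and let `φ : A → K` be a homomorphism whose image centralizes `A`
(i.e. lands in `M`).  Let `A_φ = {φ(x)·x : x ∈ A}`.  Then every `g ∈ G` factors uniquely as
`g = k·a'·n` with `k ∈ K`, `a' ∈ A_φ`, `n ∈ N`, and `H_φ = A_φ·N` is a closed solvable
subgroup of `G` acting simply transitively on `G/K`. -/
theorem modified_iwasawa_decomposition
    {G : Type*} [Group G] [TopologicalSpace G] [IsTopologicalGroup G] [T2Space G]
    (K A N : Subgroup G)
    (hIwa : IsHomeomorph (fun t : K × A × N => (t.1 : G) * (t.2.1 : G) * (t.2.2 : G)))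
    (hAab : ∀ x y : A, x * y = y * x)
    (hNsolv : IsSolvable N)
    (hAN : ∀ a ∈ A, ∀ m ∈ N, a * m * a⁻¹ ∈ N)
    (φ : A →* G) (hφcont : Continuous φ)
    (hφK : ∀ x : A, φ x ∈ K)
    (hφA : ∀ x y : A, φ x * (y : G) = (y : G) * φ x)
    (hφφ : ∀ x y : A, φ x * φ y = φ y * φ x)
    (hφN : ∀ x : A, ∀ m ∈ N, φ x * m * (φ x)⁻¹ ∈ N) :
    (∀ g : G, ∃! t : K × {h : G // ∃ x : A, h = φ x * x} × N,
        (t.1 : G) * (t.2.1 : G) * (t.2.2 : G) = g) ∧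
    ∃ H : Subgroup G,
      (H : Set G) = {g | ∃ x : A, ∃ m ∈ N, g = (φ x * x) * m} ∧
      IsClosed (H : Set G) ∧
      IsSolvable H ∧
      ∀ x y : G ⧸ K, ∃! h : H, (h : G) • x = y := by
  classical
  set f : K × A × N → G := fun t => (t.1 : G) * (t.2.1 : G) * (t.2.2 : G) with hf
  have hinj : Function.Injective f := hIwa.bijective.injective
  have hsurj : Function.Surjective f := hIwa.bijective.surjective
  -- uniqueness of Iwasawa components
  have huniq : ∀ (k k' : K) (a a' : A) (n n' : N),
      (k : G) * a * n = (k' : G) * a' * n' → k = k' ∧ a = a' ∧ n = n' := by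
    intro k k' a a' n n' h
    have h2 : f (k, a, n) = f (k', a', n') := h
    have h3 := hinj h2
    exact ⟨congrArg Prod.fst h3, congrArg (fun t => t.2.1) h3,
      congrArg (fun t => t.2.2) h3⟩
  -- uniqueness of the modified decomposition data
  have hmod : ∀ (x y : A) (m m' : G), m ∈ N → m' ∈ N →
      φ x * (x : G) * m = φ y * (y : G) * m' → x = y ∧ m = m' := by
    intro x y m m' hm hm' h
    have h2 := huniq ⟨φ x, hφK x⟩ ⟨φ y, hφK y⟩ x y ⟨m, hm⟩ ⟨m', hm'⟩ h
    exact ⟨h2.2.1, congrArg Subtype.val h2.2.2⟩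
  -- the product formula
  have hprod : ∀ (x y : A) (m m' : G),
      (φ x * (x : G) * m) * (φ y * (y : G) * m') =
        φ (x * y) * ((x * y : A) : G) *
          ((((y : G))⁻¹ * ((φ y)⁻¹ * m * φ y) * (y : G)) * m') := by
    intro x y m m'
    rw [map_mul]
    push_cast
    simp only [mul_assoc, mul_inv_cancel_left, inv_mul_cancel_left]
    congr 1
    rw [← mul_assoc (φ y) (x : G), hφA y x, mul_assoc, mul_inv_cancel_left]
  have hconjN : ∀ (y : A) (m : G), m ∈ N →
      ((y : G))⁻¹ * ((φ y)⁻¹ * m * φ y) * (y : G) ∈ N := by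
    intro y m hm
    have h1 : (φ y)⁻¹ * m * φ y ∈ N := by
      simpa [map_inv] using hφN y⁻¹ m hm
    simpa using hAN ((y : G))⁻¹ (A.inv_mem y.2) _ h1
  -- the subgroup H
  set S : Set G := {g | ∃ x : A, ∃ m ∈ N, g = (φ x * x) * m} with hS
  have hone : (1 : G) ∈ S := ⟨1, 1, N.one_mem, by simp⟩
  have hmulS : ∀ a b : G, a ∈ S → b ∈ S → a * b ∈ S := by
    rintro _ _ ⟨x, m, hm, rfl⟩ ⟨y, m', hm', rfl⟩
    exact ⟨x * y, _, N.mul_mem (hconjN y m hm) hm', hprod x y m m'⟩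
  have hinvS : ∀ a : G, a ∈ S → a⁻¹ ∈ S := by
    rintro _ ⟨x, m, hm, rfl⟩
    refine ⟨x⁻¹, (x : G) * (φ x * m⁻¹ * (φ x)⁻¹) * ((x : G))⁻¹,
      hAN (x : G) x.2 _ (hφN x m⁻¹ (N.inv_mem hm)), ?_⟩
    have c : ((x : G))⁻¹ * (φ x)⁻¹ = (φ x)⁻¹ * ((x : G))⁻¹ := by
      rw [← mul_inv_rev, hφA x x, mul_inv_rev]
    rw [map_inv]
    push_cast
    rw [mul_inv_rev, mul_inv_rev, c]
    group
  let H : Subgroup G :=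
    { carrier := S
      one_mem' := hone
      mul_mem' := fun ha hb => hmulS _ _ ha hb
      inv_mem' := fun ha => hinvS _ ha }
  have hHmem : ∀ g : G, g ∈ H ↔ g ∈ S := fun _ => Iff.rfl
  -- part 1 : unique modified decomposition
  have part1 : ∀ g : G, ∃! t : K × {h : G // ∃ x : A, h = φ x * x} × N,
      (t.1 : G) * (t.2.1 : G) * (t.2.2 : G) = g := by
    intro g
    obtain ⟨⟨k, a, n⟩, hg⟩ := hsurj g
    have hg' : (k : G) * a * n = g := hg
    refine ⟨⟨⟨(k : G) * (φ a)⁻¹, K.mul_mem k.2 (K.inv_mem (hφK a))⟩,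
      ⟨φ a * a, a, rfl⟩, n⟩, ?_, ?_⟩
    · show (k : G) * (φ a)⁻¹ * (φ a * a) * n = g
      rw [← hg']
      group
    · rintro ⟨k', ⟨h, x, rfl⟩, n'⟩ ht
      simp only at ht
      have ht' : ((k' : G) * φ x) * (x : G) * n' = (k : G) * a * n := by
        rw [hg']; rw [← ht]; group
      have h3 := huniq ⟨(k' : G) * φ x, K.mul_mem k'.2 (hφK x)⟩ k x a n' n ht'
      have hxa : x = a := h3.2.1
      have hk : (k' : G) * φ x = (k : G) := congrArg Subtype.val h3.1
      refine Prod.ext ?_ (Prod.ext ?_ ?_)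
      · apply Subtype.ext
        show (k' : G) = (k : G) * (φ a)⁻¹
        rw [← hk, hxa, mul_inv_cancel_right]
      · apply Subtype.ext
        show φ x * (x : G) = φ a * (a : G)
        rw [hxa]
      · exact h3.2.2
  refine ⟨part1, H, rfl, ?_, ?_, ?_⟩
  -- closedness
  · have hT : IsClosed {t : K × A × N | (t.1 : G) = φ t.2.1} :=
      isClosed_eq (continuous_subtype_val.comp continuous_fst)
        (hφcont.comp (continuous_fst.comp continuous_snd))
    have himg : f '' {t : K × A × N | (t.1 : G) = φ t.2.1} = S := by
      ext g
      constructor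
      · rintro ⟨⟨k, a, n⟩, hk, rfl⟩
        refine ⟨a, n, n.2, ?_⟩
        show (k : G) * a * n = (φ a * (a : G)) * n
        rw [hk]
      · rintro ⟨x, m, hm, rfl⟩
        exact ⟨(⟨φ x, hφK x⟩, x, ⟨m, hm⟩), rfl, by simp [f, mul_assoc]⟩
    show IsClosed S
    rw [← himg]
    exact hIwa.isClosedMap _ hT
  -- solvability
  · haveI : Group.IsSolvable N := hNsolv
    haveI : Group.IsSolvable A := isSolvable_of_comm hAab
    have hspec : ∀ h : H, ∃ m ∈ N, (h : G) = (φ h.2.choose * (h.2.choose : G)) * m :=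
      fun h => h.2.choose_spec
    let ξ : H → A := fun h => h.2.choose
    have hξ : ∀ (h : H) (x : A) (m : G), m ∈ N → (h : G) = φ x * (x : G) * m → ξ h = x := by
      intro h x m hm he
      obtain ⟨m', hm', he'⟩ := hspec h
      exact (hmod (ξ h) x m' m hm' hm (he'.symm.trans he)).1
    let ψ : H →* A :=
      { toFun := ξ
        map_one' := hξ 1 1 1 N.one_mem (by simp)
        map_mul' := by
          intro h₁ h₂
          obtain ⟨m₁, hm₁, he₁⟩ := hspec h₁
          obtain ⟨m₂, hm₂, he₂⟩ := hspec h₂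
          refine hξ (h₁ * h₂) (ξ h₁ * ξ h₂) _
            (N.mul_mem (hconjN (ξ h₂) m₁ hm₁) hm₂) ?_
          show (h₁ : G) * (h₂ : G) = _
          rw [he₁, he₂, hprod] }
    let ι : N →* H :=
      { toFun := fun n => ⟨(n : G), ⟨1, n, n.2, by simp⟩⟩
        map_one' := rfl
        map_mul' := fun _ _ => rfl }
    exact solvable_of_ker_le_range ι ψ (by
      intro h hh
      have hx : ξ h = 1 := hh
      obtain ⟨m, hm, he⟩ := hspec h
      have he2 : (h : G) = φ (ξ h) * ((ξ h : A) : G) * m := he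
      rw [hx] at he2
      simp only [map_one, OneMemClass.coe_one, one_mul] at he2
      exact ⟨⟨m, hm⟩, Subtype.ext he2.symm⟩)
  -- simply transitive action on G/K
  · have hHtriv : ∀ g : G, g ∈ H → g ∈ K → g = 1 := by
      rintro _ ⟨x, m, hm, rfl⟩ hK
      have he : ((⟨(φ x * x) * m, hK⟩ : K) : G) * ((1 : A) : G) * ((1 : N) : G) =
          ((⟨φ x, hφK x⟩ : K) : G) * (x : G) * ((⟨m, hm⟩ : N) : G) := by
        simp [mul_assoc]
      have h3 := huniq ⟨(φ x * x) * m, hK⟩ ⟨φ x, hφK x⟩ 1 x 1 ⟨m, hm⟩ he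
      have hx : (1 : A) = x := h3.2.1
      have hm1 : (1 : G) = m := congrArg Subtype.val h3.2.2
      rw [← hx, ← hm1]
      simp
    have hHK : ∀ g : G, ∃! h : H, (h : G)⁻¹ * g ∈ K := by
      intro g
      obtain ⟨⟨k, a, n⟩, hg⟩ := hsurj g⁻¹
      have hg' : (k : G) * a * n = g⁻¹ := hg
      have hgval : g = ((n : G))⁻¹ * ((a : G))⁻¹ * ((k : G))⁻¹ := by
        rw [← inv_inv g, ← hg']
        group
      have hmem : ((n : G))⁻¹ * ((a : G))⁻¹ * (φ a)⁻¹ ∈ H := by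
        refine ⟨a⁻¹, (a : G) * (φ a * ((n : G))⁻¹ * (φ a)⁻¹) * ((a : G))⁻¹,
          hAN (a : G) a.2 _ (hφN a _ (N.inv_mem n.2)), ?_⟩
        have c : ((a : G))⁻¹ * (φ a)⁻¹ = (φ a)⁻¹ * ((a : G))⁻¹ := by
          rw [← mul_inv_rev, hφA a a, mul_inv_rev]
        rw [map_inv]
        push_cast
        rw [mul_assoc ((n : G))⁻¹, c]
        group
      refine ⟨⟨_, hmem⟩, ?_, ?_⟩
      · show (((n : G))⁻¹ * ((a : G))⁻¹ * (φ a)⁻¹)⁻¹ * g ∈ K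
        have : (((n : G))⁻¹ * ((a : G))⁻¹ * (φ a)⁻¹)⁻¹ * g = φ a * ((k : G))⁻¹ := by
          rw [hgval]; group
        rw [this]
        exact K.mul_mem (hφK a) (K.inv_mem k.2)
      · intro h hh
        have hmemK : ((h : G)⁻¹ * g) * ((((n : G))⁻¹ * ((a : G))⁻¹ * (φ a)⁻¹)⁻¹ * g)⁻¹ ∈ K := by
          refine K.mul_mem hh (K.inv_mem ?_)
          show (((n : G))⁻¹ * ((a : G))⁻¹ * (φ a)⁻¹)⁻¹ * g ∈ K
          have : (((n : G))⁻¹ * ((a : G))⁻¹ * (φ a)⁻¹)⁻¹ * g = φ a * ((k : G))⁻¹ := by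
            rw [hgval]; group
          rw [this]
          exact K.mul_mem (hφK a) (K.inv_mem k.2)
        have heq : ((h : G)⁻¹ * g) * ((((n : G))⁻¹ * ((a : G))⁻¹ * (φ a)⁻¹)⁻¹ * g)⁻¹ =
            (h : G)⁻¹ * (((n : G))⁻¹ * ((a : G))⁻¹ * (φ a)⁻¹) := by group
        rw [heq] at hmemK
        have hmemH : (h : G)⁻¹ * (((n : G))⁻¹ * ((a : G))⁻¹ * (φ a)⁻¹) ∈ H :=
          H.mul_mem (H.inv_mem h.2) hmem
        have := hHtriv _ hmemH hmemK
        apply Subtype.ext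
        have : (h : G) = ((n : G))⁻¹ * ((a : G))⁻¹ * (φ a)⁻¹ := by
          have h2 := this
          rw [inv_mul_eq_one] at h2
          exact h2
        exact this
    intro xq yq
    obtain ⟨g₁, rfl⟩ := QuotientGroup.mk_surjective xq
    obtain ⟨g₂, rfl⟩ := QuotientGroup.mk_surjective yq
    obtain ⟨h₁, hh₁, hu₁⟩ := hHK g₁
    obtain ⟨h₂, hh₂, hu₂⟩ := hHK g₂
    refine ⟨h₂ * h₁⁻¹, ?_, ?_⟩
    · show ((h₂ * h₁⁻¹ : H) : G) • (QuotientGroup.mk g₁ : G ⧸ K) = QuotientGroup.mk g₂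
      rw [MulAction.Quotient.smul_mk, QuotientGroup.eq]
      have : (((h₂ * h₁⁻¹ : H) : G) • g₁)⁻¹ * g₂ =
          ((h₁ : G)⁻¹ * g₁)⁻¹ * ((h₂ : G)⁻¹ * g₂) := by
        push_cast [smul_eq_mul]
        group
      rw [this]
      exact K.mul_mem (K.inv_mem hh₁) hh₂
    · intro h hh
      have hK2 : ((h * h₁ : H) : G)⁻¹ * g₂ ∈ K := by
        have hc : ((h : G) • g₁)⁻¹ * g₂ ∈ K := by
          rw [← QuotientGroup.eq, ← MulAction.Quotient.smul_mk]
          exact hh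
        have : ((h * h₁ : H) : G)⁻¹ * g₂ =
            ((h₁ : G)⁻¹ * g₁) * (((h : G) • g₁)⁻¹ * g₂) := by
          push_cast [smul_eq_mul]
          group
        rw [this]
        exact K.mul_mem hh₁ hc
      have := hu₂ (h * h₁) hK2
      rw [← this]
      group
end
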